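/- For every m ≥ 1, there exists a ℂ-algebra isomorphism from the Clifford algebra CliffordAlgebra Q of the quadratic form Q on ℂ^(2m) to the full matrix algebra Matrix (Fin 2^m) (Fin 2^m) ℂ. (This is the statement that the Clifford algebra of a nondegenerate quadratic form on an even-dimensional complex space is isomorphic to the endomorphism algebra of the 2^m-dimensional spinor module ⋀•W, for W a maximal totally isotropic subspace.) -/

import Mathlib

noncomputable section CliffAux
open CliffordAlgebra Module

abbrev Qf (n : ℕ) : QuadraticForm ℂ (Fin n → ℂ) :=
  QuadraticMap.weightedSumSquares ℂ (fun _ : Fin n => (-1 : ℂ))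

abbrev CA (n : ℕ) := CliffordAlgebra (Qf n)

def ee {n : ℕ} (j : Fin n) : Fin n → ℂ := Pi.single j 1

lemma Qf_apply {n : ℕ} (v : Fin n → ℂ) : Qf n v = ∑ i, -(v i * v i) := by
  simp [QuadraticMap.weightedSumSquares_apply]

lemma Qf_ee {n : ℕ} (j : Fin n) : Qf n (ee j) = -1 := by
  rw [Qf_apply]
  rw [Finset.sum_eq_single j]
  · simp [ee]
  · intro i _ hij; simp [ee, Pi.single_apply, hij]
  · simp

lemma isOrtho_ee {n : ℕ} {j k : Fin n} (h : j ≠ k) : (Qf n).IsOrtho (ee j) (ee k) := by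
  rw [QuadraticMap.isOrtho_def]
  rw [Qf_apply, Qf_apply, Qf_apply, ← Finset.sum_add_distrib]
  refine Finset.sum_congr rfl fun i _ => ?_
  have hz : ee j i * ee (n := n) k i = 0 := by
    rcases eq_or_ne i j with rfl | hij
    · simp [ee, Pi.single_apply, h.symm]
    · simp [ee, Pi.single_apply, hij]
  have : (ee j i + ee (n := n) k i) * (ee j i + ee k i)
      = ee j i * ee j i + ee k i * ee k i := by ring_nf; linear_combination 2 * hz
  rw [Pi.add_apply, this]; ring

lemma ι_ee_anticomm {n : ℕ} {j k : Fin n} (h : j ≠ k) :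
    ι (Qf n) (ee j) * ι (Qf n) (ee k) = -(ι (Qf n) (ee k) * ι (Qf n) (ee j)) := by
  exact eq_neg_of_add_eq_zero_left (CliffordAlgebra.ι_mul_ι_add_swap_of_isOrtho (isOrtho_ee h))

def gl {n : ℕ} (l : List (Fin n)) : CA n := (l.map (fun j => ι (Qf n) (ee j))).prod

@[simp] lemma gl_nil {n : ℕ} : gl (n := n) [] = 1 := rfl

@[simp] lemma gl_cons {n : ℕ} (a : Fin n) (l : List (Fin n)) :
    gl (a :: l) = ι (Qf n) (ee a) * gl l := rfl

lemma key {n : ℕ} (j : Fin n) :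
    ∀ l : List (Fin n), l.Pairwise (· < ·) →
      ∃ (c : ℂ) (l' : List (Fin n)), l'.Pairwise (· < ·) ∧
        (∀ x ∈ l', x = j ∨ x ∈ l) ∧
        ι (Qf n) (ee j) * gl l = c • gl l' := by
  intro l
  induction l with
  | nil =>
    exact fun _ => ⟨1, [j], List.pairwise_singleton _ j, by simp, by simp⟩
  | cons a t ih =>
    intro hs
    rw [List.pairwise_cons] at hs
    obtain ⟨ha, hts⟩ := hs
    rcases lt_trichotomy j a with hja | rfl | haj
    · refine ⟨1, j :: a :: t, ?_, ?_, by simp⟩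
      · rw [List.pairwise_cons]
        exact ⟨fun x hx => by
          rcases List.mem_cons.1 hx with rfl | hx
          · exact hja
          · exact hja.trans (ha x hx), List.pairwise_cons.2 ⟨ha, hts⟩⟩
      · intro x hx
        rcases List.mem_cons.1 hx with rfl | hx
        · exact Or.inl rfl
        · exact Or.inr hx
    · refine ⟨-1, t, hts, fun x hx => Or.inr (List.mem_cons_of_mem _ hx), ?_⟩
      rw [gl_cons, ← mul_assoc, CliffordAlgebra.ι_sq_scalar, Qf_ee,
        Algebra.smul_def, map_neg, map_one, neg_mul, one_mul]
    · obtain ⟨c, t', ht's, ht'm, ht'e⟩ := ih hts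
      refine ⟨-c, a :: t', ?_, ?_, ?_⟩
      · rw [List.pairwise_cons]
        refine ⟨fun x hx => ?_, ht's⟩
        rcases ht'm x hx with rfl | hx
        · exact haj
        · exact ha x hx
      · intro x hx
        rcases List.mem_cons.1 hx with rfl | hx
        · exact Or.inr List.mem_cons_self
        · rcases ht'm x hx with rfl | hx'
          · exact Or.inl rfl
          · exact Or.inr (List.mem_cons_of_mem _ hx')
      · have hne : j ≠ a := ne_of_gt haj
        rw [gl_cons, ← mul_assoc, ι_ee_anticomm hne, neg_mul, mul_assoc, ht'e,
          mul_smul_comm, ← gl_cons, neg_smul]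

def fS {n : ℕ} (S : Finset (Fin n)) : CA n := gl (S.sort (· ≤ ·))

lemma gl_sorted_mem_range {n : ℕ} {l : List (Fin n)} (hl : l.Pairwise (· < ·)) :
    gl l ∈ Set.range (fS (n := n)) := by
  refine ⟨l.toFinset, ?_⟩
  have hnd : l.Nodup := hl.nodup
  have hperm : (l.toFinset.sort (· ≤ ·)).Perm l :=
    List.perm_of_nodup_nodup_toFinset_eq (Finset.sort_nodup _ _) hnd
      (by rw [Finset.sort_toFinset])
  have heq := List.Perm.eq_of_pairwise (fun a b _ _ h1 h2 => absurd (h1.trans h2) (lt_irrefl _)) (Finset.sortedLT_sort _).pairwise hl hperm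
  rw [fS, heq]

lemma ι_mul_mem_span {n : ℕ} (v : Fin n → ℂ) {x : CA n}
    (hx : x ∈ Submodule.span ℂ (Set.range (fS (n := n)))) :
    ι (Qf n) v * x ∈ Submodule.span ℂ (Set.range (fS (n := n))) := by
  induction hx using Submodule.span_induction with
  | mem x hxm =>
    obtain ⟨S, rfl⟩ := hxm
    have hv : v = ∑ j, v j • ee (n := n) j := by
      funext i
      simp [ee, Pi.single_apply]
    rw [show ι (Qf n) v = ∑ j, v j • ι (Qf n) (ee (n := n) j) by
      conv_lhs => rw [hv]
      rw [map_sum]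
      exact Finset.sum_congr rfl fun j _ => by rw [map_smul]]
    rw [Finset.sum_mul]
    refine Submodule.sum_mem _ fun j _ => ?_
    rw [smul_mul_assoc]
    refine Submodule.smul_mem _ _ ?_
    obtain ⟨c, l', hl's, _, hl'e⟩ := key j (S.sort (· ≤ ·)) (Finset.sortedLT_sort _).pairwise
    rw [show gl (S.sort (· ≤ ·)) = fS S from rfl] at hl'e
    rw [hl'e]
    exact Submodule.smul_mem _ _ (Submodule.subset_span (gl_sorted_mem_range hl's))
  | zero => simp
  | add a b _ _ ha hb => rw [mul_add]; exact Submodule.add_mem _ ha hb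
  | smul c a _ ha => rw [mul_smul_comm]; exact Submodule.smul_mem _ _ ha

lemma span_fS_top (n : ℕ) : Submodule.span ℂ (Set.range (fS (n := n))) = ⊤ := by
  refine top_unique fun x _ => ?_
  have h1 : (1 : CA n) ∈ Submodule.span ℂ (Set.range (fS (n := n))) :=
    Submodule.subset_span ⟨∅, by simp [fS]⟩
  have key2 : ∀ y : CA n, ∀ z ∈ Submodule.span ℂ (Set.range (fS (n := n))),
      y * z ∈ Submodule.span ℂ (Set.range (fS (n := n))) := by
    intro y
    induction y using CliffordAlgebra.induction with
    | algebraMap r =>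
      intro z hz
      rw [← Algebra.smul_def]
      exact Submodule.smul_mem _ _ hz
    | ι v => exact fun z hz => ι_mul_mem_span v hz
    | mul a b ha hb => intro z hz; rw [mul_assoc]; exact ha _ (hb _ hz)
    | add a b ha hb => intro z hz; rw [add_mul]; exact Submodule.add_mem _ (ha _ hz) (hb _ hz)
  simpa using key2 x 1 h1

instance CA_finiteDimensional (n : ℕ) : FiniteDimensional ℂ (CA n) :=
  ⟨⟨(Set.finite_range (fS (n := n))).toFinset, by
    rw [Set.Finite.coe_toFinset]; exact span_fS_top n⟩⟩

lemma finrank_CA_le (n : ℕ) : Module.finrank ℂ (CA n) ≤ 2 ^ n := by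
  have h := finrank_range_le_card (R := ℂ) (fS (n := n))
  rw [Set.finrank, span_fS_top n, finrank_top] at h
  simpa [Fintype.card_finset] using h

lemma algHom_bijective_of_surjective {A B : Type*} [Ring A] [Ring B] [Algebra ℂ A] [Algebra ℂ B]
    [FiniteDimensional ℂ A] [FiniteDimensional ℂ B] (f : A →ₐ[ℂ] B)
    (hs : Function.Surjective f) (hle : Module.finrank ℂ A ≤ Module.finrank ℂ B) :
    Function.Bijective f := by
  have h2 : Module.finrank ℂ B ≤ Module.finrank ℂ A := by
    have := LinearMap.finrank_range_le f.toLinearMap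
    have hrt : LinearMap.range f.toLinearMap = ⊤ := LinearMap.range_eq_top.2 hs
    rwa [hrt, finrank_top] at this
  exact ⟨(LinearMap.injective_iff_surjective_of_finrank_eq_finrank
    (f := f.toLinearMap) (le_antisymm hle h2)).2 hs, hs⟩

def e0 : CA 0 ≃ₐ[ℂ] ℂ := by
  refine AlgEquiv.ofBijective (CliffordAlgebra.lift (Qf 0) ⟨0, fun v => ?_⟩) ?_
  · rw [Qf_apply]; simp
  · refine algHom_bijective_of_surjective _ (fun r => ⟨algebraMap ℂ _ r, ?_⟩) ?_
    · rw [AlgHom.commutes]; rfl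
    · simpa using finrank_CA_le 0

def eMat1 : ℂ ≃ₐ[ℂ] Matrix (Fin 1) (Fin 1) ℂ := by
  refine AlgEquiv.ofBijective (Algebra.ofId ℂ _) ⟨(algebraMap ℂ _).injective, fun M => ⟨M 0 0, ?_⟩⟩
  ext i j
  fin_cases i <;> fin_cases j <;>
    simp [Algebra.ofId_apply, Matrix.algebraMap_matrix_apply]

def bIdx (n : ℕ) : Fin (n + 2) := ⟨n, by omega⟩
def cIdx (n : ℕ) : Fin (n + 2) := ⟨n + 1, by omega⟩
def res {n : ℕ} (v : Fin (n + 2) → ℂ) : Fin n → ℂ := fun j => v ⟨j, by omega⟩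

lemma res_add {n : ℕ} (u v : Fin (n + 2) → ℂ) : res (u + v) = res u + res v := rfl
lemma res_smul {n : ℕ} (c : ℂ) (v : Fin (n + 2) → ℂ) : res (c • v) = c • res v := rfl

def Fmap (n : ℕ) : (Fin (n + 2) → ℂ) →ₗ[ℂ] Matrix (Fin 2) (Fin 2) (CA n) where
  toFun v := !![ι (Qf n) (res v), algebraMap ℂ _ (v (bIdx n) + Complex.I * v (cIdx n));
      algebraMap ℂ _ (-v (bIdx n) + Complex.I * v (cIdx n)), -ι (Qf n) (res v)]
  map_add' u v := by
    ext i j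
    fin_cases i <;> fin_cases j
    · simp only [Fin.zero_eta, Fin.mk_one, Matrix.add_apply, Matrix.smul_apply, Matrix.cons_val', Matrix.cons_val_zero, Matrix.cons_val_one, Matrix.head_cons, Matrix.empty_val', Matrix.cons_val_fin_one, Matrix.head_fin_const, RingHom.id_apply, Matrix.of_apply, Pi.add_apply, Pi.smul_apply, smul_eq_mul]; rw [res_add, map_add]
    · simp only [Fin.zero_eta, Fin.mk_one, Matrix.add_apply, Matrix.smul_apply, Matrix.cons_val', Matrix.cons_val_zero, Matrix.cons_val_one, Matrix.head_cons, Matrix.empty_val', Matrix.cons_val_fin_one, Matrix.head_fin_const, RingHom.id_apply, Matrix.of_apply, Pi.add_apply, Pi.smul_apply, smul_eq_mul]; rw [← map_add]; congr 1; ring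
    · simp only [Fin.zero_eta, Fin.mk_one, Matrix.add_apply, Matrix.smul_apply, Matrix.cons_val', Matrix.cons_val_zero, Matrix.cons_val_one, Matrix.head_cons, Matrix.empty_val', Matrix.cons_val_fin_one, Matrix.head_fin_const, RingHom.id_apply, Matrix.of_apply, Pi.add_apply, Pi.smul_apply, smul_eq_mul]; rw [← map_add]; congr 1; ring
    · simp only [Fin.zero_eta, Fin.mk_one, Matrix.add_apply, Matrix.smul_apply, Matrix.cons_val', Matrix.cons_val_zero, Matrix.cons_val_one, Matrix.head_cons, Matrix.empty_val', Matrix.cons_val_fin_one, Matrix.head_fin_const, RingHom.id_apply, Matrix.of_apply, Pi.add_apply, Pi.smul_apply, smul_eq_mul]; rw [res_add, map_add, neg_add]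
  map_smul' c v := by
    ext i j
    fin_cases i <;> fin_cases j
    · simp only [Fin.zero_eta, Fin.mk_one, Matrix.add_apply, Matrix.smul_apply, Matrix.cons_val', Matrix.cons_val_zero, Matrix.cons_val_one, Matrix.head_cons, Matrix.empty_val', Matrix.cons_val_fin_one, Matrix.head_fin_const, RingHom.id_apply, Matrix.of_apply, Pi.add_apply, Pi.smul_apply, smul_eq_mul]; rw [res_smul, map_smul]
    · simp only [Fin.zero_eta, Fin.mk_one, Matrix.add_apply, Matrix.smul_apply, Matrix.cons_val', Matrix.cons_val_zero, Matrix.cons_val_one, Matrix.head_cons, Matrix.empty_val', Matrix.cons_val_fin_one, Matrix.head_fin_const, RingHom.id_apply, Matrix.of_apply, Pi.add_apply, Pi.smul_apply, smul_eq_mul]; rw [Algebra.smul_def, ← map_mul]; congr 1; ring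
    · simp only [Fin.zero_eta, Fin.mk_one, Matrix.add_apply, Matrix.smul_apply, Matrix.cons_val', Matrix.cons_val_zero, Matrix.cons_val_one, Matrix.head_cons, Matrix.empty_val', Matrix.cons_val_fin_one, Matrix.head_fin_const, RingHom.id_apply, Matrix.of_apply, Pi.add_apply, Pi.smul_apply, smul_eq_mul]; rw [Algebra.smul_def, ← map_mul]; congr 1; ring
    · simp only [Fin.zero_eta, Fin.mk_one, Matrix.add_apply, Matrix.smul_apply, Matrix.cons_val', Matrix.cons_val_zero, Matrix.cons_val_one, Matrix.head_cons, Matrix.empty_val', Matrix.cons_val_fin_one, Matrix.head_fin_const, RingHom.id_apply, Matrix.of_apply, Pi.add_apply, Pi.smul_apply, smul_eq_mul]; rw [res_smul, map_smul, smul_neg]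

lemma Qf_split (n : ℕ) (v : Fin (n + 2) → ℂ) :
    Qf (n + 2) v = Qf n (res v) +
      (-(v (bIdx n) * v (bIdx n)) - v (cIdx n) * v (cIdx n)) := by
  rw [Qf_apply, Qf_apply, Fin.sum_univ_castSucc, Fin.sum_univ_castSucc]
  have h1 : ∀ j : Fin n, v (j.castSucc.castSucc) = res v j := fun j => rfl
  have h2 : v ((Fin.last n).castSucc) = v (bIdx n) := rfl
  have h3 : v (Fin.last (n + 1)) = v (cIdx n) := rfl
  simp only [h1, h2, h3]
  ring

lemma algebraMap_fin2 {A : Type*} [Semiring A] [Algebra ℂ A] (r : ℂ) :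
    algebraMap ℂ (Matrix (Fin 2) (Fin 2) A) r = !![algebraMap ℂ A r, 0; 0, algebraMap ℂ A r] := by
  ext i j
  fin_cases i <;> fin_cases j <;> simp [Matrix.algebraMap_matrix_apply]

lemma Fmap_sq (n : ℕ) (v : Fin (n + 2) → ℂ) :
    Fmap n v * Fmap n v = algebraMap ℂ _ (Qf (n + 2) v) := by
  set r := res v with hr
  set s := v (bIdx n) + Complex.I * v (cIdx n) with hs
  set t := -v (bIdx n) + Complex.I * v (cIdx n) with ht
  have hFv : Fmap n v = !![ι (Qf n) r, algebraMap ℂ _ s; algebraMap ℂ _ t, -ι (Qf n) r] := rfl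
  rw [hFv, Matrix.mul_fin_two]
  have h11 : ι (Qf n) r * ι (Qf n) r + algebraMap ℂ _ s * algebraMap ℂ _ t
      = algebraMap ℂ (CA n) (Qf (n + 2) v) := by
    rw [CliffordAlgebra.ι_sq_scalar, ← map_mul, ← map_add]
    congr 1
    rw [Qf_split n v, hs, ht]
    linear_combination (v (cIdx n) * v (cIdx n)) * Complex.I_sq
  have h12 : ι (Qf n) r * algebraMap ℂ _ s + algebraMap ℂ (CA n) s * -ι (Qf n) r = 0 := by
    simp [mul_neg, Algebra.commutes]
  have h21 : algebraMap ℂ (CA n) t * ι (Qf n) r + -ι (Qf n) r * algebraMap ℂ _ t = 0 := by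
    simp [neg_mul, Algebra.commutes]
  have h22 : algebraMap ℂ (CA n) t * algebraMap ℂ _ s + -ι (Qf n) r * -ι (Qf n) r
      = algebraMap ℂ (CA n) (Qf (n + 2) v) := by
    rw [neg_mul_neg, CliffordAlgebra.ι_sq_scalar, ← map_mul, ← map_add]
    congr 1
    rw [Qf_split n v, hs, ht]
    linear_combination (v (cIdx n) * v (cIdx n)) * Complex.I_sq
  rw [h11, h12, h21, h22, algebraMap_fin2]

def phi (n : ℕ) : CA (n + 2) →ₐ[ℂ] Matrix (Fin 2) (Fin 2) (CA n) :=
  CliffordAlgebra.lift (Qf (n + 2)) ⟨Fmap n, Fmap_sq n⟩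

lemma phi_ι (n : ℕ) (v : Fin (n + 2) → ℂ) : phi n (ι (Qf (n + 2)) v) = Fmap n v :=
  CliffordAlgebra.lift_ι_apply _ _ _

def ext0 {n : ℕ} (y : Fin n → ℂ) : Fin (n + 2) → ℂ :=
  fun i => if h : (i : ℕ) < n then y ⟨i, h⟩ else 0

lemma res_ext0 {n : ℕ} (y : Fin n → ℂ) : res (ext0 y) = y := by
  funext j
  simp [res, ext0, j.isLt]

lemma ext0_b {n : ℕ} (y : Fin n → ℂ) : ext0 y (bIdx n) = 0 := by simp [ext0, bIdx]
lemma ext0_c {n : ℕ} (y : Fin n → ℂ) : ext0 y (cIdx n) = 0 := by simp [ext0, cIdx]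

lemma res_ee_b (n : ℕ) : res (ee (bIdx n)) = 0 := by
  funext j
  exact Pi.single_eq_of_ne (Fin.ne_of_val_ne (by simpa [bIdx] using j.isLt.ne)) 1

lemma res_ee_c (n : ℕ) : res (ee (cIdx n)) = 0 := by
  funext j
  exact Pi.single_eq_of_ne (Fin.ne_of_val_ne (by simp [cIdx]; omega)) 1

lemma phi_surjective (n : ℕ) : Function.Surjective (phi n) := by
  set S := (phi n).range with hS
  have hu : (!![0, 1; -1, 0] : Matrix (Fin 2) (Fin 2) (CA n)) ∈ S := by
    have hx : phi n (ι (Qf (n + 2)) (ee (bIdx n))) = !![0, 1; -1, 0] := by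
      rw [phi_ι]
      have hb : ee (bIdx n) (bIdx n) = 1 := Pi.single_eq_same _ _
      have hc : ee (bIdx n) (cIdx n) = 0 :=
        Pi.single_eq_of_ne (Fin.ne_of_val_ne (by simp [bIdx, cIdx])) 1
      ext i j
      fin_cases i <;> fin_cases j <;>
        simp [Fmap, res_ee_b, hb, hc]
    exact ⟨_, hx⟩
  have hw : (!![0, algebraMap ℂ (CA n) Complex.I; algebraMap ℂ (CA n) Complex.I, 0]
      : Matrix (Fin 2) (Fin 2) (CA n)) ∈ S := by
    have hx : phi n (ι (Qf (n + 2)) (ee (cIdx n))) =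
        !![0, algebraMap ℂ (CA n) Complex.I; algebraMap ℂ (CA n) Complex.I, 0] := by
      rw [phi_ι]
      have hb : ee (cIdx n) (bIdx n) = 0 :=
        Pi.single_eq_of_ne (Fin.ne_of_val_ne (by simp [bIdx, cIdx])) 1
      have hc : ee (cIdx n) (cIdx n) = 1 := Pi.single_eq_same _ _
      ext i j
      fin_cases i <;> fin_cases j <;>
        simp [Fmap, res_ee_c, hb, hc]
    exact ⟨_, hx⟩
  have hd : (!![algebraMap ℂ (CA n) Complex.I, 0; 0, algebraMap ℂ (CA n) (-Complex.I)]
      : Matrix (Fin 2) (Fin 2) (CA n)) ∈ S := by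
    have hm := S.mul_mem hu hw
    have hmul : (!![0, 1; -1, 0] : Matrix (Fin 2) (Fin 2) (CA n)) *
        !![0, algebraMap ℂ (CA n) Complex.I; algebraMap ℂ (CA n) Complex.I, 0] =
        !![algebraMap ℂ (CA n) Complex.I, 0; 0, algebraMap ℂ (CA n) (-Complex.I)] := by
      ext i j
      fin_cases i <;> fin_cases j <;>
        simp [Matrix.mul_apply, Fin.sum_univ_two, map_neg]
    rwa [hmul] at hm
  have hE : (!![1, 0; 0, 0] : Matrix (Fin 2) (Fin 2) (CA n)) ∈ S := by
    have hm := S.add_mem (S.smul_mem S.one_mem ((2⁻¹ : ℂ))) (S.smul_mem hd (-(Complex.I)/2))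
    have e1 : (2⁻¹ : ℂ) • (1 : CA n) + (-Complex.I / 2) • algebraMap ℂ (CA n) Complex.I
        = 1 := by
      rw [Algebra.smul_def, Algebra.smul_def, mul_one, ← map_mul, ← map_add,
        ← map_one (algebraMap ℂ (CA n))]
      congr 1
      linear_combination (-(1 : ℂ)/2) * Complex.I_sq
    have e2 : (2⁻¹ : ℂ) • (1 : CA n) + -((-Complex.I / 2) • algebraMap ℂ (CA n) Complex.I)
        = 0 := by
      rw [Algebra.smul_def, Algebra.smul_def, mul_one, ← map_mul, ← map_neg, ← map_add,
        ← map_zero (algebraMap ℂ (CA n))]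
      congr 1
      linear_combination ((1 : ℂ)/2) * Complex.I_sq
    have hid : ((2⁻¹ : ℂ)) • (1 : Matrix (Fin 2) (Fin 2) (CA n)) +
        (-(Complex.I)/2) • !![algebraMap ℂ (CA n) Complex.I, 0; 0, algebraMap ℂ (CA n) (-Complex.I)]
        = !![1, 0; 0, 0] := by
      ext i j
      fin_cases i <;> fin_cases j <;>
        simp [Matrix.add_apply, Matrix.smul_apply, Matrix.one_apply, e1, e2]
    rwa [hid] at hm
  have hdiag : ∀ x : CA n,
      (!![x, 0; 0, CliffordAlgebra.involute x] : Matrix (Fin 2) (Fin 2) (CA n)) ∈ S := by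
    intro x
    induction x using CliffordAlgebra.induction with
    | algebraMap r =>
      rw [AlgHom.commutes, ← algebraMap_fin2]
      exact S.algebraMap_mem r
    | ι v =>
      have hx : phi n (ι (Qf (n + 2)) (ext0 v)) =
          !![ι (Qf n) v, 0; 0, CliffordAlgebra.involute (ι (Qf n) v)] := by
        rw [phi_ι, CliffordAlgebra.involute_ι]
        ext i j
        fin_cases i <;> fin_cases j <;>
          simp [Fmap, res_ext0, ext0_b, ext0_c]
      exact ⟨_, hx⟩
    | mul a b ha hb =>
      have hm := S.mul_mem ha hb
      have hmul : (!![a, 0; 0, CliffordAlgebra.involute a] : Matrix (Fin 2) (Fin 2) (CA n)) *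
          !![b, 0; 0, CliffordAlgebra.involute b]
          = !![a * b, 0; 0, CliffordAlgebra.involute (a * b)] := by
        rw [map_mul]
        ext i j
        fin_cases i <;> fin_cases j <;>
          simp [Matrix.mul_apply, Fin.sum_univ_two]
      rwa [hmul] at hm
    | add a b ha hb =>
      have hm := S.add_mem ha hb
      have hadd : (!![a, 0; 0, CliffordAlgebra.involute a] : Matrix (Fin 2) (Fin 2) (CA n)) +
          !![b, 0; 0, CliffordAlgebra.involute b]
          = !![a + b, 0; 0, CliffordAlgebra.involute (a + b)] := by
        rw [map_add]
        ext i j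
        fin_cases i <;> fin_cases j <;>
          simp [Matrix.add_apply]
      rwa [hadd] at hm
  have h00 : ∀ x : CA n, (!![x, 0; 0, 0] : Matrix (Fin 2) (Fin 2) (CA n)) ∈ S := by
    intro x
    have hm := S.mul_mem hE (hdiag x)
    have hmul : (!![1, 0; 0, 0] : Matrix (Fin 2) (Fin 2) (CA n)) *
        !![x, 0; 0, CliffordAlgebra.involute x] = !![x, 0; 0, 0] := by
      ext i j
      fin_cases i <;> fin_cases j <;>
        simp [Matrix.mul_apply, Fin.sum_univ_two]
    rwa [hmul] at hm
  have h01 : ∀ x : CA n, (!![0, x; 0, 0] : Matrix (Fin 2) (Fin 2) (CA n)) ∈ S := by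
    intro x
    have hm := S.mul_mem (h00 x) hu
    have hmul : (!![x, 0; 0, 0] : Matrix (Fin 2) (Fin 2) (CA n)) * !![0, 1; -1, 0]
        = !![0, x; 0, 0] := by
      ext i j
      fin_cases i <;> fin_cases j <;>
        simp [Matrix.mul_apply, Fin.sum_univ_two]
    rwa [hmul] at hm
  have h10 : ∀ x : CA n, (!![0, 0; x, 0] : Matrix (Fin 2) (Fin 2) (CA n)) ∈ S := by
    intro x
    have hm := S.mul_mem hu (h00 (-x))
    have hmul : (!![0, 1; -1, 0] : Matrix (Fin 2) (Fin 2) (CA n)) * !![-x, 0; 0, 0]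
        = !![0, 0; x, 0] := by
      ext i j
      fin_cases i <;> fin_cases j <;>
        simp [Matrix.mul_apply, Fin.sum_univ_two]
    rwa [hmul] at hm
  have h11 : ∀ x : CA n, (!![0, 0; 0, x] : Matrix (Fin 2) (Fin 2) (CA n)) ∈ S := by
    intro x
    have hm := S.mul_mem hu (h01 (-x))
    have hmul : (!![0, 1; -1, 0] : Matrix (Fin 2) (Fin 2) (CA n)) * !![0, -x; 0, 0]
        = !![0, 0; 0, x] := by
      ext i j
      fin_cases i <;> fin_cases j <;>
        simp [Matrix.mul_apply, Fin.sum_univ_two]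
    rwa [hmul] at hm
  intro M
  have hM : M ∈ S := by
    have hdec : M = !![M 0 0, 0; 0, 0] + !![0, M 0 1; 0, 0] + !![0, 0; M 1 0, 0]
        + !![0, 0; 0, M 1 1] := by
      ext i j
      fin_cases i <;> fin_cases j <;> simp [Matrix.add_apply]
    rw [hdec]
    exact S.add_mem (S.add_mem (S.add_mem (h00 _) (h01 _)) (h10 _)) (h11 _)
  exact hM

def step (n N : ℕ) (e : CA n ≃ₐ[ℂ] Matrix (Fin N) (Fin N) ℂ) (hN : N * N = 2 ^ n) :
    CA (n + 2) ≃ₐ[ℂ] Matrix (Fin (2 * N)) (Fin (2 * N)) ℂ := by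
  let Φ : CA (n + 2) →ₐ[ℂ] Matrix (Fin (2 * N)) (Fin (2 * N)) ℂ :=
    (Matrix.reindexAlgEquiv ℂ ℂ finProdFinEquiv).toAlgHom.comp
      ((Matrix.compAlgEquiv (Fin 2) (Fin N) ℂ ℂ).toAlgHom.comp
        (((AlgEquiv.mapMatrix (m := Fin 2) e)).toAlgHom.comp (phi n)))
  have hsurj : Function.Surjective Φ := by
    simp only [Φ, AlgHom.coe_comp, AlgEquiv.toAlgHom_eq_coe, AlgHom.coe_coe]
    exact (AlgEquiv.surjective _).comp ((AlgEquiv.surjective _).comp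
      ((AlgEquiv.surjective _).comp (phi_surjective n)))
  have hle : Module.finrank ℂ (CA (n + 2)) ≤
      Module.finrank ℂ (Matrix (Fin (2 * N)) (Fin (2 * N)) ℂ) := by
    have h1 := finrank_CA_le (n + 2)
    have h2 : Module.finrank ℂ (Matrix (Fin (2 * N)) (Fin (2 * N)) ℂ)
        = (2 * N) * ((2 * N)) := by
      rw [Module.finrank_matrix]
      simp
    rw [h2]
    refine h1.trans_eq ?_
    rw [pow_succ, pow_succ, ← hN]
    ring
  exact AlgEquiv.ofBijective Φ (algHom_bijective_of_surjective Φ hsurj hle)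

lemma main (m : ℕ) : Nonempty (CA (2 * m) ≃ₐ[ℂ] Matrix (Fin (2 ^ m)) (Fin (2 ^ m)) ℂ) := by
  induction m with
  | zero => exact ⟨e0.trans eMat1⟩
  | succ m ih =>
    obtain ⟨e⟩ := ih
    have hN : 2 ^ m * 2 ^ m = 2 ^ (2 * m) := by rw [two_mul, pow_add]
    have hcast : 2 * 2 ^ m = 2 ^ (m + 1) := by rw [pow_succ]; ring
    exact ⟨(step (2 * m) (2 ^ m) e hN).trans
      (Matrix.reindexAlgEquiv ℂ ℂ (finCongr hcast))⟩

end CliffAux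

theorem cliffordAlgebra_even_dim_iso_matrix (m : ℕ) (hm : 1 ≤ m) :
    Nonempty
      (CliffordAlgebra
          (QuadraticMap.weightedSumSquares ℂ (fun _ : Fin (2 * m) => (-1 : ℂ))) ≃ₐ[ℂ]
        Matrix (Fin (2 ^ m)) (Fin (2 ^ m)) ℂ) :=
  main m
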